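/- Let A be a d×d real matrix with trace zero, where d ≥ 2. Then for every vector v ∈ ℝ^d, the quadratic form satisfies (Av, v) ≤ √((d−1)/d) · ‖A‖ · |v|², where ‖A‖ is the Frobenius (Hilbert–Schmidt) norm of A. -/

import Mathlib

/-- A trace-free d×d real matrix satisfies the quadratic form bound
`(Av, v) ≤ √((d−1)/d) ‖A‖_F |v|²`, where `‖A‖_F` is the Frobenius norm. -/
theorem tracefree_quadratic_form_bound (d : ℕ) (hd : 2 ≤ d)
    (A : Matrix (Fin d) (Fin d) ℝ) (hA : Matrix.trace A = 0) (v : Fin d → ℝ) :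
    ∑ i, (∑ j, A i j * v j) * v i ≤
      Real.sqrt (((d : ℝ) - 1) / d) * Real.sqrt (∑ i, ∑ j, (A i j) ^ 2) *
        (∑ i, (v i) ^ 2) := by
  have hd0 : (0:ℝ) < d := by
    have : (2:ℝ) ≤ d := by exact_mod_cast hd
    linarith
  set S : ℝ := ∑ i, (v i) ^ 2 with hSdef
  have hS0 : 0 ≤ S := Finset.sum_nonneg fun i _ => sq_nonneg _
  set B : Matrix (Fin d) (Fin d) ℝ :=
    fun i j => v i * v j - (if i = j then S / d else 0) with hBdef
  -- step 1: rewrite LHS as Frobenius inner product with B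
  have htr : ∑ i, A i i = 0 := by
    simpa [Matrix.trace, Matrix.diag] using hA
  have key : ∑ i, (∑ j, A i j * v j) * v i = ∑ i, ∑ j, A i j * B i j := by
    have h1 : ∀ i : Fin d, ∑ j, A i j * B i j
        = (∑ j, A i j * v j) * v i - A i i * (S / d) := by
      intro i
      have : ∀ j : Fin d, A i j * B i j
          = A i j * v j * v i - (if j = i then A i j * (S / d) else 0) := by
        intro j
        by_cases h : i = j <;> simp [hBdef, h, eq_comm] <;> ring
      rw [Finset.sum_congr rfl fun j _ => this j, Finset.sum_sub_distrib,
        Finset.sum_ite_eq' Finset.univ i (fun j => A i j * (S / d)),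
        Finset.sum_mul]
      simp
    rw [Finset.sum_congr rfl fun i _ => h1 i, Finset.sum_sub_distrib,
      ← Finset.sum_mul, htr]
    ring
  -- step 2: Frobenius norm of B
  have hBnorm : ∑ i, ∑ j, (B i j) ^ 2 = ((d : ℝ) - 1) / d * S ^ 2 := by
    have h1 : ∀ i : Fin d, ∑ j, (B i j) ^ 2
        = (v i) ^ 2 * S - 2 * (v i) ^ 2 * (S / d) + (S / d) ^ 2 := by
      intro i
      have : ∀ j : Fin d, (B i j) ^ 2
          = (v i) ^ 2 * (v j) ^ 2
            + (if j = i then - 2 * (v i) ^ 2 * (S / d) + (S / d) ^ 2 else 0) := by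
        intro j
        by_cases h : i = j <;> simp [hBdef, h, eq_comm] <;> ring
      rw [Finset.sum_congr rfl fun j _ => this j, Finset.sum_add_distrib,
        Finset.sum_ite_eq' Finset.univ i
          (fun _ => - 2 * (v i) ^ 2 * (S / d) + (S / d) ^ 2),
        ← Finset.mul_sum]
      simp [hSdef]
      ring
    rw [Finset.sum_congr rfl fun i _ => h1 i]
    rw [Finset.sum_add_distrib, Finset.sum_sub_distrib, ← Finset.sum_mul,
      Finset.sum_const, Finset.card_univ, Fintype.card_fin]
    have h2 : ∑ i : Fin d, 2 * v i ^ 2 * (S / ↑d) = 2 * S * (S / ↑d) := by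
      rw [← Finset.sum_mul, ← Finset.mul_sum, ← hSdef]
    rw [h2, ← hSdef]
    have hdne : (d : ℝ) ≠ 0 := hd0.ne'
    field_simp
    have h3 : (d : ℝ) ^ 2 * (d : ℝ)⁻¹ ^ 2 = 1 := by
      rw [← mul_pow, mul_inv_cancel₀ hdne, one_pow]
    linear_combination S ^ 2 * h3
  -- step 3: Cauchy-Schwarz
  have cs : ∑ i, ∑ j, A i j * B i j
      ≤ Real.sqrt (∑ i, ∑ j, (A i j) ^ 2) * Real.sqrt (∑ i, ∑ j, (B i j) ^ 2) := by
    have := Real.sum_mul_le_sqrt_mul_sqrt (Finset.univ : Finset (Fin d × Fin d))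
      (fun p => A p.1 p.2) (fun p => B p.1 p.2)
    simpa [Fintype.sum_prod_type] using this
  have hfrac : 0 ≤ ((d : ℝ) - 1) / d := by
    apply div_nonneg _ hd0.le
    have : (2:ℝ) ≤ d := by exact_mod_cast hd
    linarith
  have hsqB : Real.sqrt (∑ i, ∑ j, (B i j) ^ 2)
      = Real.sqrt (((d : ℝ) - 1) / d) * S := by
    rw [hBnorm, Real.sqrt_mul hfrac, Real.sqrt_sq hS0]
  calc ∑ i, (∑ j, A i j * v j) * v i
      = ∑ i, ∑ j, A i j * B i j := key
    _ ≤ Real.sqrt (∑ i, ∑ j, (A i j) ^ 2) * Real.sqrt (∑ i, ∑ j, (B i j) ^ 2) := cs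
    _ = Real.sqrt (((d : ℝ) - 1) / d) * Real.sqrt (∑ i, ∑ j, (A i j) ^ 2) * S := by
        rw [hsqB]; ring
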